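/- arXiv:2512.22773 — 3 statements merged into one kernel-verified Lean document; each statement's English description precedes it below -/
import Mathlib

section
/- For every natural number m ≥ 1, a binomial random variable X ~ Binom(m, 3/4) satisfies P(X > m/2) > 1/2; that is, ∑_{k : k > m/2} C(m, k) (3/4)^k (1/4)^{m−k} > 1/2. -/
open Finset

lemma nat_refl (m n : ℕ) (hnm : n ≤ m) :
    ∑ k ∈ Finset.range (n + 1), m.choose k * 3 ^ k
      = ∑ j ∈ Finset.Ico (m - n) (m + 1), m.choose j * 3 ^ (m - j) := by
  apply Finset.sum_nbij' (fun k => m - k) (fun j => m - j)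
  · intro a ha
    simp only [Finset.mem_range, Nat.lt_succ_iff] at ha
    simp only [Finset.mem_Ico]; omega
  · intro a ha
    simp only [Finset.mem_Ico] at ha
    simp only [Finset.mem_range, Nat.lt_succ_iff]; omega
  · intro a ha; simp only [Finset.mem_range, Nat.lt_succ_iff] at ha; omega
  · intro a ha; simp only [Finset.mem_Ico] at ha; omega
  · intro a ha
    simp only [Finset.mem_range, Nat.lt_succ_iff] at ha
    rw [Nat.choose_symm (by omega), Nat.sub_sub_self (by omega : a ≤ m)]

lemma nat_key (m : ℕ) (hm : 1 ≤ m) :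
    ∑ k ∈ Finset.range (m / 2 + 1), m.choose k * 3 ^ k <
      ∑ k ∈ Finset.Ico (m / 2 + 1) (m + 1), m.choose k * 3 ^ k := by
  set n := m / 2 with hn
  have hnm : n < m := by omega
  rw [nat_refl m n (by omega)]
  rcases Nat.even_or_odd m with he | ho
  · -- even case
    obtain ⟨t, ht⟩ := he
    have hm2n : m = 2 * n := by omega
    have hmn : m - n = n := by omega
    have hn1 : 1 ≤ n := by omega
    rw [hmn]
    rw [Finset.sum_eq_sum_Ico_succ_bot (by omega : n < m + 1), hmn]
    set S := ∑ k ∈ Finset.Ico (n + 1) (m + 1), m.choose k * 3 ^ k with hS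
    set A := ∑ j ∈ Finset.Ico (n + 1) (m + 1), m.choose j * 3 ^ (m - j) with hA
    have h1 : 9 * A ≤ S := by
      rw [hA, hS, Finset.mul_sum]
      apply Finset.sum_le_sum
      intro j hj
      simp only [Finset.mem_Ico] at hj
      have h32 : 9 * (m.choose j * 3 ^ (m - j)) = m.choose j * 3 ^ (m - j + 2) := by
        rw [pow_add]; ring
      rw [h32]
      exact Nat.mul_le_mul_left _ (Nat.pow_le_pow_right (by norm_num) (by omega))
    have hc : m.choose (n + 1) * (n + 1) = m.choose n * n := by
      have := Nat.choose_succ_right_eq m n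
      rw [this, hmn]
    have h2 : m.choose n ≤ 2 * m.choose (n + 1) := by
      have : m.choose n * (n + 1) ≤ 2 * m.choose (n + 1) * (n + 1) := by nlinarith
      exact Nat.le_of_mul_le_mul_right this (by omega)
    have h3 : m.choose (n + 1) * 3 ^ (n + 1) ≤ S := by
      refine Finset.single_le_sum (f := fun k => m.choose k * 3 ^ k)
        (fun i _ => Nat.zero_le _) ?_
      simp only [Finset.mem_Ico]; omega
    have hSpos : 1 ≤ S := by
      have h0 : 0 < m.choose (n + 1) * 3 ^ (n + 1) :=
        Nat.mul_pos (Nat.choose_pos (by omega)) (Nat.pow_pos (by norm_num))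
      omega
    have h2' : 9 * (m.choose n * 3 ^ n) ≤ 6 * (m.choose (n + 1) * 3 ^ (n + 1)) :=
      calc 9 * (m.choose n * 3 ^ n) = 3 * (m.choose n * (3 * 3 ^ n)) := by ring
        _ ≤ 3 * (2 * m.choose (n + 1) * (3 * 3 ^ n)) := by
            refine Nat.mul_le_mul_left _ (Nat.mul_le_mul_right _ h2)
        _ = 6 * (m.choose (n + 1) * 3 ^ (n + 1)) := by rw [pow_succ]; ring
    omega
  · -- odd case
    obtain ⟨t, ht⟩ := ho
    have hmn : m - n = n + 1 := by omega
    rw [hmn]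
    apply Finset.sum_lt_sum_of_nonempty
    · exact Finset.nonempty_Ico.mpr (by omega)
    · intro j hj
      simp only [Finset.mem_Ico] at hj
      have hcp : 0 < m.choose j := Nat.choose_pos (by omega)
      have : 3 ^ (m - j) < 3 ^ j := Nat.pow_lt_pow_right (by norm_num) (by omega)
      exact (Nat.mul_lt_mul_left hcp).mpr this

open Real

/-- For every `m ≥ 1`, a binomial random variable `X ~ Binom(m, 3/4)` satisfies
`P(X > m/2) > 1/2`. -/
theorem binomial_three_quarters_median (m : ℕ) (hm : 1 ≤ m) :
    (1 : ℝ) / 2 <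
      ∑ k ∈ Finset.range (m + 1),
        (if (m : ℝ) / 2 < (k : ℝ) then
          (m.choose k : ℝ) * (3 / 4) ^ k * (1 / 4) ^ (m - k) else 0) := by
  have hval : ∀ k, k ≤ m →
      (m.choose k : ℝ) * (3 / 4) ^ k * (1 / 4) ^ (m - k)
        = ((m.choose k * 3 ^ k : ℕ) : ℝ) * (1 / 4) ^ m := by
    intro k hk
    have h34 : ((3:ℝ)/4) ^ k = 3 ^ k * (1/4) ^ k := by
      rw [show (3:ℝ)/4 = 3 * (1/4) by norm_num, mul_pow]
    have h4 : ((1:ℝ)/4) ^ k * (1/4) ^ (m - k) = (1/4) ^ m := by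
      rw [← pow_add]; congr 1; omega
    push_cast
    calc (m.choose k : ℝ) * (3/4) ^ k * (1/4) ^ (m - k)
        = (m.choose k : ℝ) * 3 ^ k * ((1/4) ^ k * (1/4) ^ (m - k)) := by
          rw [h34]; ring
      _ = (m.choose k : ℝ) * 3 ^ k * (1/4) ^ m := by rw [h4]
  have hcond : ∀ k : ℕ, ((m:ℝ)/2 < (k:ℝ)) ↔ (m/2 + 1 ≤ k) := by
    intro k
    rw [div_lt_iff₀ (by norm_num : (0:ℝ) < 2)]
    have : ((m:ℝ) < (k:ℝ) * 2) ↔ (m < k * 2) := by exact_mod_cast Iff.rfl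
    rw [this]
    omega
  -- rewrite the goal sum
  have hgoal : ∑ k ∈ Finset.range (m + 1),
      (if (m : ℝ) / 2 < (k : ℝ) then
        (m.choose k : ℝ) * (3 / 4) ^ k * (1 / 4) ^ (m - k) else 0)
      = ∑ k ∈ Finset.Ico (m/2 + 1) (m + 1),
          ((m.choose k * 3 ^ k : ℕ) : ℝ) * (1/4) ^ m := by
    rw [show Finset.Ico (m/2 + 1) (m + 1)
        = Finset.filter (fun k => m/2 + 1 ≤ k) (Finset.range (m + 1)) by
      ext k
      simp only [Finset.mem_Ico, Finset.mem_filter, Finset.mem_range]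
      omega]
    rw [Finset.sum_filter]
    apply Finset.sum_congr rfl
    intro k hk
    simp only [Finset.mem_range, Nat.lt_succ_iff] at hk
    simp only [hcond]
    by_cases h : m/2 + 1 ≤ k
    · rw [if_pos h, if_pos h, hval k hk]
    · rw [if_neg h, if_neg h]
  rw [hgoal]
  -- total probability is 1
  have htot : ∑ k ∈ Finset.range (m + 1),
      ((m.choose k * 3 ^ k : ℕ) : ℝ) * (1/4) ^ m = 1 := by
    have h1 : ((3:ℝ)/4 + 1/4) ^ m
        = ∑ k ∈ Finset.range (m + 1), (3/4:ℝ)^k * (1/4)^(m-k) * (m.choose k) :=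
      add_pow _ _ m
    have h2 : ((3:ℝ)/4 + 1/4) ^ m = 1 := by norm_num
    rw [h2] at h1
    calc ∑ k ∈ Finset.range (m + 1), ((m.choose k * 3 ^ k : ℕ) : ℝ) * (1/4) ^ m
        = ∑ k ∈ Finset.range (m + 1), (3/4:ℝ)^k * (1/4)^(m-k) * (m.choose k) := by
          apply Finset.sum_congr rfl
          intro k hk
          simp only [Finset.mem_range, Nat.lt_succ_iff] at hk
          rw [← hval k hk]; ring
      _ = 1 := h1.symm
  -- split the total sum
  have hsplit : (∑ k ∈ Finset.range (m/2 + 1), ((m.choose k * 3 ^ k : ℕ) : ℝ) * (1/4) ^ m)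
      + ∑ k ∈ Finset.Ico (m/2 + 1) (m + 1), ((m.choose k * 3 ^ k : ℕ) : ℝ) * (1/4) ^ m
      = ∑ k ∈ Finset.range (m + 1), ((m.choose k * 3 ^ k : ℕ) : ℝ) * (1/4) ^ m := by
    rw [Finset.range_eq_Ico, Finset.range_eq_Ico]
    exact Finset.sum_Ico_consecutive (fun k => ((m.choose k * 3 ^ k : ℕ) : ℝ) * (1/4) ^ m) (by omega : 0 ≤ m/2 + 1) (by omega : m/2 + 1 ≤ m + 1)
  -- compare the two halves using the nat inequality
  have hlt : (∑ k ∈ Finset.range (m/2 + 1), ((m.choose k * 3 ^ k : ℕ) : ℝ) * (1/4) ^ m)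
      < ∑ k ∈ Finset.Ico (m/2 + 1) (m + 1), ((m.choose k * 3 ^ k : ℕ) : ℝ) * (1/4) ^ m := by
    rw [← Finset.sum_mul, ← Finset.sum_mul, ← Nat.cast_sum, ← Nat.cast_sum]
    exact mul_lt_mul_of_pos_right (Nat.cast_lt.mpr (nat_key m hm)) (by positivity)
  linarith [htot, hsplit, hlt]
end

section
/- Let a, b > 0 be real constants and let π₁, π₂ ≥ 0 with π₁ + π₂ = 1. For a natural number n ≥ 2, set Lₙ = (log n)/n and define Gₙ(t) = π₁·[(a·Lₙ)^t (b·Lₙ)^{1−t} + (1 − a·Lₙ)^t (1 − b·Lₙ)^{1−t}] + π₂·[(b·Lₙ)^t (a·Lₙ)^{1−t} + (1 − b·Lₙ)^t (1 − a·Lₙ)^{1−t}] for t ∈ [0,1]. Then (1/Lₙ)·(1 − inf_{t ∈ [0,1]} Gₙ(t)) converges, as n → ∞, to sup_{t ∈ [0,1]} [π₁·(t·a + (1−t)·b − a^t b^{1−t}) + π₂·(t·b + (1−t)·a − b^t a^{1−t})]. -/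
set_option maxHeartbeats 1600000

open Filter Topology Real


lemma aux_log_lb {x : ℝ} (hx : x < 1) : x ≤ -Real.log (1 - x) := by
  have h := Real.log_le_sub_one_of_pos (show (0:ℝ) < 1 - x by linarith)
  linarith

lemma aux_log_ub {x : ℝ} (hx : x ≤ 1/2) : -Real.log (1 - x) ≤ x + 2*x^2 := by
  have h1 : (0:ℝ) < 1 - x := by linarith
  have h2 := Real.log_le_sub_one_of_pos (inv_pos.mpr h1)
  rw [Real.log_inv] at h2
  have h3 : (1-x)⁻¹ ≤ 1 + x + 2*x^2 := by
    rw [inv_le_iff_one_le_mul₀ h1]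
    nlinarith [mul_nonneg (sq_nonneg x) (show (0:ℝ) ≤ 1 - 2*x by linarith)]
  linarith

lemma aux_exp_ub {v : ℝ} : 1 - Real.exp (-v) ≤ v := by
  have := Real.add_one_le_exp (-v); linarith

lemma aux_exp_lb {v : ℝ} (hv : 0 ≤ v) : v - v^2 ≤ 1 - Real.exp (-v) := by
  have h1 := Real.add_one_le_exp (-v)
  have h2 := Real.add_one_le_exp v
  have h3 : Real.exp (-v) * Real.exp v = 1 := by rw [← Real.exp_add]; simp
  have h4 : (0:ℝ) < Real.exp (-v) := Real.exp_pos _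
  nlinarith [mul_nonneg h4.le (show (0:ℝ) ≤ Real.exp v - (1+v) by linarith),
    mul_nonneg hv (show (0:ℝ) ≤ Real.exp (-v) - (1-v) by linarith)]

lemma core_bound (a b L t : ℝ) (ha : 0 < a) (hb : 0 < b) (hL : 0 < L) (hL1 : L ≤ 1)
    (haL : a*L ≤ 1/2) (hbL : b*L ≤ 1/2) (ht0 : 0 ≤ t) (ht1 : t ≤ 1) :
    |(1 - (1 - a*L)^t * (1 - b*L)^(1-t)) / L - (t*a + (1-t)*b)|
      ≤ ((a+b+2*(a^2+b^2))^2 + 2*(a^2+b^2)) * L := by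
  have haL0 : 0 < a*L := mul_pos ha hL
  have hbL0 : 0 < b*L := mul_pos hb hL
  have h1a : (0:ℝ) < 1 - a*L := by linarith
  have h1b : (0:ℝ) < 1 - b*L := by linarith
  set v : ℝ := -(Real.log (1 - a*L) * t + Real.log (1 - b*L) * (1-t)) with hv
  have hP : (1 - a*L)^t * (1 - b*L)^(1-t) = Real.exp (-v) := by
    rw [Real.rpow_def_of_pos h1a, Real.rpow_def_of_pos h1b, ← Real.exp_add, hv]
    ring_nf
  set s : ℝ := t*a + (1-t)*b with hs
  set M : ℝ := 2*(a^2+b^2) with hM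
  set K : ℝ := a+b+2*(a^2+b^2) with hK
  have hM0 : 0 ≤ M := by positivity
  have hs0 : 0 ≤ s := by nlinarith
  have hsK : s ≤ a + b := by nlinarith
  -- bounds on v
  have hla := aux_log_lb (show a*L < 1 by linarith)
  have hlb := aux_log_lb (show b*L < 1 by linarith)
  have hua := aux_log_ub haL
  have hub := aux_log_ub hbL
  have hv_lb : s * L ≤ v := by
    have h1 : t * (a*L) ≤ t * (-Real.log (1-a*L)) := by
      apply mul_le_mul_of_nonneg_left hla ht0
    have h2 : (1-t) * (b*L) ≤ (1-t) * (-Real.log (1-b*L)) := by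
      apply mul_le_mul_of_nonneg_left hlb (by linarith)
    rw [hv, hs]; nlinarith
  have hv_ub : v ≤ s * L + M * L^2 := by
    have h1 : t * (-Real.log (1-a*L)) ≤ t * (a*L + 2*(a*L)^2) :=
      mul_le_mul_of_nonneg_left hua ht0
    have h2 : (1-t) * (-Real.log (1-b*L)) ≤ (1-t) * (b*L + 2*(b*L)^2) :=
      mul_le_mul_of_nonneg_left hub (by linarith)
    have h3 : t * (a*L + 2*(a*L)^2) + (1-t) * (b*L + 2*(b*L)^2) ≤ s*L + M*L^2 := by
      rw [hs, hM]
      have e1 : t * (2*(a*L)^2) ≤ 2*(a*L)^2 := by nlinarith [sq_nonneg (a*L)]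
      have e2 : (1-t) * (2*(b*L)^2) ≤ 2*(b*L)^2 := by nlinarith [sq_nonneg (b*L)]
      nlinarith [sq_nonneg L]
    rw [hv]; nlinarith
  have hvK : v ≤ K * L := by
    have : M * L^2 ≤ M * L := by nlinarith
    rw [hK]; nlinarith
  have hv0 : 0 ≤ v := le_trans (by positivity) hv_lb
  -- bounds on 1 - exp(-v)
  have he_ub : 1 - Real.exp (-v) ≤ v := aux_exp_ub
  have he_lb : v - v^2 ≤ 1 - Real.exp (-v) := aux_exp_lb hv0
  have hv2 : v^2 ≤ K^2 * L^2 := by nlinarith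
  have hlow : (s - (K^2+M)*L) * L ≤ 1 - Real.exp (-v) := by
    nlinarith [mul_nonneg hM0 (sq_nonneg L)]
  have hhigh : 1 - Real.exp (-v) ≤ (s + (K^2+M)*L) * L := by
    nlinarith [sq_nonneg (K*L)]
  rw [hP, abs_le]
  constructor
  · have := (le_div_iff₀ hL).mpr hlow; linarith
  · have := (div_le_iff₀ hL).mpr hhigh; linarith

lemma mul_rpow_split (a b L t : ℝ) (ha : 0 < a) (hb : 0 < b) (hL : 0 < L) :
    (a*L)^t * (b*L)^(1-t) = L * (a^t * b^(1-t)) := by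
  rw [Real.mul_rpow ha.le hL.le, Real.mul_rpow hb.le hL.le,
    show a^t * L^t * (b^(1-t) * L^(1-t)) = (L^t * L^(1-t)) * (a^t * b^(1-t)) by ring,
    ← Real.rpow_add hL]
  norm_num

lemma pointwise_bound (a b π₁ π₂ : ℝ) (ha : 0 < a) (hb : 0 < b)
    (hπ₁ : 0 ≤ π₁) (hπ₂ : 0 ≤ π₂) (hπ : π₁ + π₂ = 1)
    (L : ℝ) (hL : 0 < L) (hL1 : L ≤ 1) (haL : a * L ≤ 1/2) (hbL : b * L ≤ 1/2)
    (t : ℝ) (ht0 : 0 ≤ t) (ht1 : t ≤ 1) :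
    |(1/L) * (1 - (π₁ * ((a*L)^t * (b*L)^(1-t) + (1 - a*L)^t * (1 - b*L)^(1-t))
      + π₂ * ((b*L)^t * (a*L)^(1-t) + (1 - b*L)^t * (1 - a*L)^(1-t))))
      - (π₁ * (t*a + (1-t)*b - a^t * b^(1-t)) + π₂ * (t*b + (1-t)*a - b^t * a^(1-t)))|
      ≤ ((a+b+2*(a^2+b^2))^2 + 2*(a^2+b^2)) * L := by
  set C : ℝ := (a+b+2*(a^2+b^2))^2 + 2*(a^2+b^2) with hC
  set D₁ : ℝ := (1 - (1 - a*L)^t * (1 - b*L)^(1-t)) / L - (t*a + (1-t)*b) with hD₁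
  set D₂ : ℝ := (1 - (1 - b*L)^t * (1 - a*L)^(1-t)) / L - (t*b + (1-t)*a) with hD₂
  have hkey : (1/L) * (1 - (π₁ * ((a*L)^t * (b*L)^(1-t) + (1 - a*L)^t * (1 - b*L)^(1-t))
      + π₂ * ((b*L)^t * (a*L)^(1-t) + (1 - b*L)^t * (1 - a*L)^(1-t))))
      - (π₁ * (t*a + (1-t)*b - a^t * b^(1-t)) + π₂ * (t*b + (1-t)*a - b^t * a^(1-t)))
      = π₁ * D₁ + π₂ * D₂ := by
    have hπ₂' : π₂ = 1 - π₁ := by linarith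
    rw [mul_rpow_split a b L t ha hb hL, mul_rpow_split b a L t hb ha hL, hD₁, hD₂, hπ₂']
    field_simp
    ring
  rw [hkey]
  have h1 := core_bound a b L t ha hb hL hL1 haL hbL ht0 ht1
  have h2 := core_bound b a L t hb ha hL hL1 hbL haL ht0 ht1
  rw [← hD₁, ← hC] at h1
  have hCsym : (b+a+2*(b^2+a^2))^2 + 2*(b^2+a^2) = C := by rw [hC]; ring
  rw [← hD₂] at h2
  have h2' : |D₂| ≤ C * L := by
    calc |D₂| ≤ ((b+a+2*(b^2+a^2))^2 + 2*(b^2+a^2)) * L := h2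
    _ = C * L := by rw [hCsym]
  calc |π₁ * D₁ + π₂ * D₂| ≤ |π₁ * D₁| + |π₂ * D₂| := abs_add_le _ _
    _ = π₁ * |D₁| + π₂ * |D₂| := by rw [abs_mul, abs_mul, abs_of_nonneg hπ₁, abs_of_nonneg hπ₂]
    _ ≤ π₁ * (C*L) + π₂ * (C*L) := by
        apply add_le_add (mul_le_mul_of_nonneg_left h1 hπ₁) (mul_le_mul_of_nonneg_left h2' hπ₂)
    _ = C * L := by rw [← add_mul, hπ, one_mul]

lemma sSup_affine (S : Set ℝ) (hne : S.Nonempty) (hbd : BddBelow S) (c : ℝ) (hc : 0 < c) :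
    sSup ((fun x => c * (1 - x)) '' S) = c * (1 - sInf S) := by
  have hba : BddAbove ((fun x => c * (1 - x)) '' S) := by
    refine ⟨c * (1 - sInf S), ?_⟩
    rintro y ⟨x, hx, rfl⟩
    have h := csInf_le hbd hx
    show c * (1 - x) ≤ c * (1 - sInf S)
    nlinarith
  apply le_antisymm
  · apply csSup_le (hne.image _)
    rintro y ⟨x, hx, rfl⟩
    have h := csInf_le hbd hx
    show c * (1 - x) ≤ c * (1 - sInf S)
    nlinarith
  · set M := sSup ((fun x => c * (1 - x)) '' S) with hM
    have hlb : ∀ x ∈ S, 1 - M / c ≤ x := by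
      intro x hx
      have h := le_csSup hba (Set.mem_image_of_mem _ hx)
      have h2 : 1 - x ≤ M / c := (le_div_iff₀ hc).mpr (by linarith [h])
      linarith
    have h3 : 1 - M / c ≤ sInf S := le_csInf hne hlb
    have h4 : c * (1 - sInf S) ≤ c * (M / c) := by
      apply mul_le_mul_of_nonneg_left (by linarith) hc.le
    rwa [mul_div_cancel₀ _ hc.ne'] at h4

/-- The rescaled Chernoff–Hellinger divergence between the Bernoulli distribution vectors
`((Bern(a·Lₙ), Bern(b·Lₙ)), (Bern(b·Lₙ), Bern(a·Lₙ)))` with prior `(π₁, π₂)`, where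
`Lₙ = (log n)/n`, converges to the Abbe–Sandon Chernoff–Hellinger divergence
`sup_{t ∈ [0,1]} [π₁·(t·a + (1−t)·b − a^t b^{1−t}) + π₂·(t·b + (1−t)·a − b^t a^{1−t})]`. -/
theorem CH_divergence_limit (a b : ℝ) (ha : 0 < a) (hb : 0 < b)
    (π₁ π₂ : ℝ) (hπ₁ : 0 ≤ π₁) (hπ₂ : 0 ≤ π₂) (hπ : π₁ + π₂ = 1) :
    Tendsto (fun n : ℕ =>
        ((n : ℝ) / Real.log n) *
          (1 - sInf ((fun t : ℝ =>
            π₁ * ((a * (Real.log n / n)) ^ t * (b * (Real.log n / n)) ^ (1 - t)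
              + (1 - a * (Real.log n / n)) ^ t * (1 - b * (Real.log n / n)) ^ (1 - t))
            + π₂ * ((b * (Real.log n / n)) ^ t * (a * (Real.log n / n)) ^ (1 - t)
              + (1 - b * (Real.log n / n)) ^ t * (1 - a * (Real.log n / n)) ^ (1 - t)))
            '' Set.Icc (0 : ℝ) 1)))
      atTop
      (nhds (sSup ((fun t : ℝ =>
        π₁ * (t * a + (1 - t) * b - a ^ t * b ^ (1 - t))
          + π₂ * (t * b + (1 - t) * a - b ^ t * a ^ (1 - t))) '' Set.Icc (0 : ℝ) 1))) := by
  set C : ℝ := (a+b+2*(a^2+b^2))^2 + 2*(a^2+b^2) with hC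
  have hC0 : 0 ≤ C := by positivity
  set f : ℝ → ℝ := fun t : ℝ =>
        π₁ * (t * a + (1 - t) * b - a ^ t * b ^ (1 - t))
          + π₂ * (t * b + (1 - t) * a - b ^ t * a ^ (1 - t)) with hf
  have hfc : Continuous f := by
    have he : f = fun t : ℝ =>
        π₁ * (t * a + (1 - t) * b - Real.exp (Real.log a * t) * Real.exp (Real.log b * (1 - t)))
          + π₂ * (t * b + (1 - t) * a - Real.exp (Real.log b * t) * Real.exp (Real.log a * (1 - t))) := by
      funext t
      rw [hf]
      simp only [Real.rpow_def_of_pos ha, Real.rpow_def_of_pos hb]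
    rw [he]; fun_prop
  have hne : (f '' Set.Icc (0:ℝ) 1).Nonempty := (Set.nonempty_Icc.mpr zero_le_one).image f
  have hba : BddAbove (f '' Set.Icc (0:ℝ) 1) := (isCompact_Icc.image hfc).bddAbove
  have hLtend : Tendsto (fun n : ℕ => Real.log n / n) atTop (nhds 0) :=
    Real.isLittleO_log_id_atTop.tendsto_div_nhds_zero.comp tendsto_natCast_atTop_atTop
  have hmin : (0:ℝ) < min 1 (min (1/(2*a)) (1/(2*b))) := by positivity
  rw [tendsto_iff_dist_tendsto_zero]
  refine squeeze_zero' (Eventually.of_forall fun n => dist_nonneg) ?_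
    (by simpa using hLtend.const_mul C)
  filter_upwards [hLtend.eventually (eventually_lt_nhds hmin), eventually_ge_atTop 2]
    with n hs hn2
  rw [Real.dist_eq]
  set L : ℝ := Real.log n / n with hLdef
  have hn1 : (1:ℝ) < (n:ℝ) := by
    have : (2:ℝ) ≤ (n:ℝ) := by exact_mod_cast hn2
    linarith
  have hlog : 0 < Real.log n := Real.log_pos hn1
  have hL : 0 < L := div_pos hlog (by linarith)
  have hL1 : L ≤ 1 := (lt_of_lt_of_le hs (min_le_left _ _)).le
  have haL : a * L ≤ 1/2 := by
    have h := lt_of_lt_of_le hs (le_trans (min_le_right _ _) (min_le_left _ _))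
    rw [lt_div_iff₀ (by positivity)] at h
    nlinarith
  have hbL : b * L ≤ 1/2 := by
    have h := lt_of_lt_of_le hs (le_trans (min_le_right _ _) (min_le_right _ _))
    rw [lt_div_iff₀ (by positivity)] at h
    nlinarith
  have h1a : (0:ℝ) < 1 - a*L := by nlinarith
  have h1b : (0:ℝ) < 1 - b*L := by nlinarith
  set G : ℝ → ℝ := fun t : ℝ =>
      π₁ * ((a * L) ^ t * (b * L) ^ (1 - t)
        + (1 - a * L) ^ t * (1 - b * L) ^ (1 - t))
      + π₂ * ((b * L) ^ t * (a * L) ^ (1 - t)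
        + (1 - b * L) ^ t * (1 - a * L) ^ (1 - t)) with hG
  have hcoef : ((n:ℝ) / Real.log n) = 1 / L := by
    rw [hLdef, one_div_div]
  have hGpos : ∀ x ∈ G '' Set.Icc (0:ℝ) 1, (0:ℝ) ≤ x := by
    rintro x ⟨t, ht, rfl⟩
    have p1 : (0:ℝ) < a * L := mul_pos ha hL
    have p2 : (0:ℝ) < b * L := mul_pos hb hL
    have := Real.rpow_pos_of_pos p1 t
    rw [hG]
    positivity
  have hGne : (G '' Set.Icc (0:ℝ) 1).Nonempty := (Set.nonempty_Icc.mpr zero_le_one).image G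
  have hGbb : BddBelow (G '' Set.Icc (0:ℝ) 1) := ⟨0, fun x hx => hGpos x hx⟩
  have hstep : ((n:ℝ) / Real.log n) * (1 - sInf (G '' Set.Icc (0:ℝ) 1))
      = sSup ((fun t => (1/L) * (1 - G t)) '' Set.Icc (0:ℝ) 1) := by
    have h := sSup_affine (G '' Set.Icc (0:ℝ) 1) hGne hGbb (1/L) (by positivity)
    rw [Set.image_image] at h
    rw [hcoef, ← h]
  have hptw : ∀ t ∈ Set.Icc (0:ℝ) 1, |(1/L) * (1 - G t) - f t| ≤ C * L := by
    intro t ht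
    have h := pointwise_bound a b π₁ π₂ ha hb hπ₁ hπ₂ hπ L hL hL1 haL hbL t ht.1 ht.2
    rw [← hC] at h
    simp only [hG, hf]
    convert h using 3 <;> ring_nf
  have hFne : ((fun t => (1/L) * (1 - G t)) '' Set.Icc (0:ℝ) 1).Nonempty :=
    (Set.nonempty_Icc.mpr zero_le_one).image _
  have hFba : BddAbove ((fun t => (1/L) * (1 - G t)) '' Set.Icc (0:ℝ) 1) := by
    refine ⟨sSup (f '' Set.Icc (0:ℝ) 1) + C * L, ?_⟩
    rintro y ⟨t, ht, rfl⟩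
    have h1 := abs_le.mp (hptw t ht)
    have h2 := le_csSup hba (Set.mem_image_of_mem f ht)
    show 1 / L * (1 - G t) ≤ sSup (f '' Set.Icc (0:ℝ) 1) + C * L
    have e1 : 1 / L * (1 - G t) ≤ f t + C * L := by linarith [h1.2]
    clear_value C f G L
    linarith [e1, h2]
  have hsup1 : sSup ((fun t => (1/L) * (1 - G t)) '' Set.Icc (0:ℝ) 1)
      ≤ sSup (f '' Set.Icc (0:ℝ) 1) + C * L := by
    apply csSup_le hFne
    rintro y ⟨t, ht, rfl⟩
    have h1 := abs_le.mp (hptw t ht)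
    have h2 := le_csSup hba (Set.mem_image_of_mem f ht)
    show 1 / L * (1 - G t) ≤ sSup (f '' Set.Icc (0:ℝ) 1) + C * L
    have e1 : 1 / L * (1 - G t) ≤ f t + C * L := by linarith [h1.2]
    clear_value C f G L
    linarith [e1, h2]
  have hsup2 : sSup (f '' Set.Icc (0:ℝ) 1)
      ≤ sSup ((fun t => (1/L) * (1 - G t)) '' Set.Icc (0:ℝ) 1) + C * L := by
    apply csSup_le hne
    rintro y ⟨t, ht, rfl⟩
    have h1 := abs_le.mp (hptw t ht)
    have h2 := le_csSup hFba (Set.mem_image_of_mem (fun t => (1/L) * (1 - G t)) ht)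
    have h2' : 1 / L * (1 - G t) ≤ sSup ((fun t => 1 / L * (1 - G t)) '' Set.Icc (0:ℝ) 1) := h2
    show f t ≤ sSup ((fun t => 1 / L * (1 - G t)) '' Set.Icc (0:ℝ) 1) + C * L
    linarith [h1.1]
  rw [hstep, abs_le]
  constructor <;> linarith
end

section
/- For any real constants a, b with 0 < a < 1 and 0 < b < 1, and for every real t, the function value a^t b^{1−t} + b^t a^{1−t} + (1 − a)^t (1 − b)^{1−t} + (1 − b)^t (1 − a)^{1−t} is at least its value at t = 1/2; that is, 2√(a·b) + 2√((1 − a)(1 − b)) ≤ a^t b^{1−t} + b^t a^{1−t} + (1 − a)^t (1 − b)^{1−t} + (1 − b)^t (1 − a)^{1−t} for all t ∈ ℝ. -/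
open Real

lemma pair_ge (x y : ℝ) (hx : 0 < x) (hy : 0 < y) (t : ℝ) :
    2 * Real.sqrt (x * y) ≤ x ^ t * y ^ (1 - t) + y ^ t * x ^ (1 - t) := by
  have h1 : (0:ℝ) < x ^ t * y ^ (1 - t) := by positivity
  have h2 : (0:ℝ) < y ^ t * x ^ (1 - t) := by positivity
  have hprod : (x ^ t * y ^ (1 - t)) * (y ^ t * x ^ (1 - t)) = x * y := by
    rw [show (x ^ t * y ^ (1 - t)) * (y ^ t * x ^ (1 - t))
        = (x ^ t * x ^ (1 - t)) * (y ^ t * y ^ (1 - t)) by ring,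
      ← Real.rpow_add hx, ← Real.rpow_add hy]
    simp
  have := Real.sqrt_nonneg (x ^ t * y ^ (1 - t))
  have := Real.sqrt_nonneg (y ^ t * x ^ (1 - t))
  have key : 2 * Real.sqrt ((x ^ t * y ^ (1 - t)) * (y ^ t * x ^ (1 - t)))
      ≤ x ^ t * y ^ (1 - t) + y ^ t * x ^ (1 - t) := by
    rw [Real.sqrt_mul h1.le]
    nlinarith [sq_nonneg (Real.sqrt (x ^ t * y ^ (1 - t)) - Real.sqrt (y ^ t * x ^ (1 - t))),
      Real.sq_sqrt h1.le, Real.sq_sqrt h2.le]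
  rwa [hprod] at key

/-- For `0 < a < 1`, `0 < b < 1` and any real `t`, the function
`t ↦ a^t b^{1−t} + b^t a^{1−t} + (1−a)^t (1−b)^{1−t} + (1−b)^t (1−a)^{1−t}` is at least its
value at `t = 1/2`, namely `2√(ab) + 2√((1−a)(1−b))`. -/
theorem symmetric_mgf_min_at_half (a b : ℝ) (ha0 : 0 < a) (ha1 : a < 1)
    (hb0 : 0 < b) (hb1 : b < 1) (t : ℝ) :
    2 * Real.sqrt (a * b) + 2 * Real.sqrt ((1 - a) * (1 - b)) ≤
      a ^ t * b ^ (1 - t) + b ^ t * a ^ (1 - t)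
        + (1 - a) ^ t * (1 - b) ^ (1 - t) + (1 - b) ^ t * (1 - a) ^ (1 - t) := by
  have h1 := pair_ge a b ha0 hb0 t
  have h2 := pair_ge (1 - a) (1 - b) (by linarith) (by linarith) t
  linarith
end
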